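/- Let Σ be a d×d positive definite real matrix and V a d×d diagonal positive definite matrix, and define d_Σ := 𝟙_dᵀ (V^{-1/2} Σ⁻¹ V^{-1/2}) 𝟙_d, where 𝟙_d is the all-ones vector. Then for every x ∈ ℝ^d, ∏_{c=1}^d R((V^{-1/2}Σ⁻¹x)_c) ≥ R( (√(d_Σ)/d) · √(xᵀΣ⁻¹x) )^d, where R is the Mills ratio of the standard normal distribution. -/

import Mathlib

open Matrix MeasureTheory Real Set

/-- The Mills ratio of the standard normal distribution:
`R(x) = e^{x²/2} ∫_x^∞ e^{-t²/2} dt`. -/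
noncomputable def millsRatio (x : ℝ) : ℝ :=
  Real.exp (x ^ 2 / 2) * ∫ t in Set.Ioi x, Real.exp (-t ^ 2 / 2)

lemma gauss_integrable : Integrable (fun t : ℝ => Real.exp (-t ^ 2 / 2)) := by
  have h := integrable_exp_neg_mul_sq (by norm_num : (0:ℝ) < 1/2)
  refine h.congr (Filter.Eventually.of_forall fun t => ?_)
  ring_nf

lemma integrand_eq (x s : ℝ) :
    Real.exp (x ^ 2 / 2) * Real.exp (-(s + x) ^ 2 / 2) = Real.exp (-(x * s) - s ^ 2 / 2) := by
  rw [← Real.exp_add]; ring_nf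

lemma integrable_g (x : ℝ) :
    Integrable (fun s : ℝ => Real.exp (-(x * s) - s ^ 2 / 2)) := by
  have := (gauss_integrable.comp_add_right x).const_mul (Real.exp (x ^ 2 / 2))
  refine this.congr (Filter.Eventually.of_forall fun s => integrand_eq x s)

lemma millsRatio_eq (x : ℝ) :
    millsRatio x = ∫ s in Set.Ioi (0:ℝ), Real.exp (-(x * s) - s ^ 2 / 2) := by
  have hmp := measurePreserving_add_right (volume : Measure ℝ) x
  have hemb := measurableEmbedding_addRight x
  have h1 : (∫ t in Set.Ioi x, Real.exp (-t ^ 2 / 2))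
      = ∫ s in Set.Ioi (0:ℝ), Real.exp (-(s + x) ^ 2 / 2) := by
    have := hmp.setIntegral_preimage_emb hemb (fun t => Real.exp (-t ^ 2 / 2)) (Set.Ioi x)
    rw [← this]
    congr 1
    ext s
    simp
  rw [millsRatio, h1, ← integral_const_mul]
  exact setIntegral_congr_fun measurableSet_Ioi fun s _ => integrand_eq x s

lemma millsRatio_pos (x : ℝ) : 0 < millsRatio x := by
  rw [millsRatio_eq]
  rw [setIntegral_pos_iff_support_of_nonneg_ae
    (Filter.Eventually.of_forall fun s => (Real.exp_pos _).le)
    (integrable_g x).integrableOn]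
  have : Function.support (fun s : ℝ => Real.exp (-(x * s) - s ^ 2 / 2)) = Set.univ := by
    ext s; simp [Function.mem_support, (Real.exp_pos _).ne']
  rw [this, Set.univ_inter]
  simp

lemma millsRatio_anti {a b : ℝ} (hab : a ≤ b) : millsRatio b ≤ millsRatio a := by
  rw [millsRatio_eq, millsRatio_eq]
  refine setIntegral_mono_on (integrable_g b).integrableOn (integrable_g a).integrableOn
    measurableSet_Ioi fun s hs => ?_
  apply Real.exp_le_exp.2
  have : a * s ≤ b * s := mul_le_mul_of_nonneg_right hab (le_of_lt hs)
  linarith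

lemma log_millsRatio_convex : ConvexOn ℝ Set.univ (fun x => Real.log (millsRatio x)) := by
  refine ⟨convex_univ, fun a _ b _ α β hα hβ hab => ?_⟩
  rcases eq_or_lt_of_le hα with h0 | hα
  · have : β = 1 := by linarith
    simp [← h0, this]
  rcases eq_or_lt_of_le hβ with h0 | hβ
  · have : α = 1 := by linarith
    simp [← h0, this]
  set c := α * a + β * b with hc
  have key : millsRatio c ≤ millsRatio a ^ α * millsRatio b ^ β := by
    have hpq : Real.HolderConjugate (1/α) (1/β) := Real.holderConjugate_one_div hα hβ hab
    set μ := (volume : Measure ℝ).restrict (Set.Ioi (0:ℝ)) with hμ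
    set f := fun s : ℝ => Real.exp (-(a * s) - s ^ 2 / 2) ^ α with hf
    set g := fun s : ℝ => Real.exp (-(b * s) - s ^ 2 / 2) ^ β with hg
    have hpow : ∀ (e : ℝ), e ≠ 0 → ∀ w s : ℝ,
        (Real.exp (-(w * s) - s ^ 2 / 2) ^ e) ^ (1/e) = Real.exp (-(w * s) - s ^ 2 / 2) := by
      intro e he w s
      rw [← Real.rpow_mul (Real.exp_pos _).le, mul_one_div, div_self he, Real.rpow_one]
    have hfm : ∀ (e : ℝ), 0 < e → ∀ (w : ℝ),
        MemLp (fun s : ℝ => Real.exp (-(w * s) - s ^ 2 / 2) ^ e) (ENNReal.ofReal (1/e)) μ := by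
      intro e he w
      have A : ENNReal.ofReal (1 / e) ≠ 0 := by
        rwa [Ne, ENNReal.ofReal_eq_zero, not_le, one_div_pos]
      have B : ENNReal.ofReal (1 / e) ≠ ⊤ := ENNReal.ofReal_ne_top
      have hmeas : AEStronglyMeasurable
          (fun s : ℝ => Real.exp (-(w * s) - s ^ 2 / 2) ^ e) μ := by
        apply Continuous.aestronglyMeasurable
        exact (Real.continuous_exp.comp (by continuity)).rpow_const
          (fun s => Or.inl (Real.exp_pos _).ne')
      rw [← memLp_norm_rpow_iff hmeas A B, ENNReal.toReal_ofReal (one_div_nonneg.mpr he.le),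
        ENNReal.div_self A B, memLp_one_iff_integrable]
      refine ((integrable_g w).integrableOn).congr (Filter.Eventually.of_forall fun s => ?_)
      dsimp only
      rw [Real.norm_of_nonneg (Real.rpow_nonneg (Real.exp_pos _).le _), hpow e he.ne' w s]
    have hf0 : 0 ≤ᵐ[μ] f :=
      Filter.Eventually.of_forall fun s => Real.rpow_nonneg (Real.exp_pos _).le _
    have hg0 : 0 ≤ᵐ[μ] g :=
      Filter.Eventually.of_forall fun s => Real.rpow_nonneg (Real.exp_pos _).le _
    have H := integral_mul_le_Lp_mul_Lq_of_nonneg hpq hf0 hg0 (hfm α hα a) (hfm β hβ b)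
    have e1 : ∫ s, f s * g s ∂μ = millsRatio c := by
      rw [millsRatio_eq]
      refine integral_congr_ae (Filter.Eventually.of_forall fun s => ?_)
      simp only [hf, hg]
      rw [← Real.exp_mul, ← Real.exp_mul, ← Real.exp_add]
      congr 1
      have : α + β = 1 := hab
      nlinarith [this]
    have e2 : ∫ s, f s ^ (1/α) ∂μ = millsRatio a := by
      rw [millsRatio_eq]
      exact integral_congr_ae (Filter.Eventually.of_forall fun s => hpow α hα.ne' a s)
    have e3 : ∫ s, g s ^ (1/β) ∂μ = millsRatio b := by
      rw [millsRatio_eq]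
      exact integral_congr_ae (Filter.Eventually.of_forall fun s => hpow β hβ.ne' b s)
    rw [e1, e2, e3, one_div_one_div, one_div_one_div] at H
    exact H
  calc Real.log (millsRatio c) ≤ Real.log (millsRatio a ^ α * millsRatio b ^ β) :=
        Real.log_le_log (millsRatio_pos c) key
    _ = α * Real.log (millsRatio a) + β * Real.log (millsRatio b) := by
        rw [Real.log_mul (Real.rpow_pos_of_pos (millsRatio_pos a) _).ne'
          (Real.rpow_pos_of_pos (millsRatio_pos b) _).ne',
          Real.log_rpow (millsRatio_pos a), Real.log_rpow (millsRatio_pos b)]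
section CS
variable {n : ℕ}

lemma dot_symm {A : Matrix (Fin n) (Fin n) ℝ} (hA : A.IsHermitian) (p q : Fin n → ℝ) :
    p ⬝ᵥ A.mulVec q = q ⬝ᵥ A.mulVec p := by
  have hT : Aᵀ = A := by
    have := hA.eq
    rwa [Matrix.conjTranspose_eq_transpose_of_trivial] at this
  rw [Matrix.dotProduct_mulVec, ← Matrix.mulVec_transpose, hT, dotProduct_comm]

lemma cs_posSemidef {A : Matrix (Fin n) (Fin n) ℝ} (hA : A.PosSemidef) (u w : Fin n → ℝ) :
    u ⬝ᵥ A.mulVec w ≤ Real.sqrt (u ⬝ᵥ A.mulVec u) * Real.sqrt (w ⬝ᵥ A.mulVec w) := by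
  have hnn : ∀ z : Fin n → ℝ, 0 ≤ z ⬝ᵥ A.mulVec z := by
    intro z
    have := hA.dotProduct_mulVec_nonneg z
    simpa using this
  have hquad : ∀ t : ℝ, 0 ≤ (w ⬝ᵥ A.mulVec w) * (t * t) + (2 * (u ⬝ᵥ A.mulVec w)) * t
      + (u ⬝ᵥ A.mulVec u) := by
    intro t
    have h := hnn (u + t • w)
    have hsym := dot_symm hA.1 w u
    simp only [Matrix.mulVec_add, Matrix.mulVec_smul, dotProduct_add,
      add_dotProduct, dotProduct_smul, smul_dotProduct,
      smul_eq_mul] at h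
    rw [hsym] at h
    nlinarith [h]
  have hd := discrim_le_zero hquad
  rw [discrim] at hd
  have h2 : (u ⬝ᵥ A.mulVec w) ^ 2 ≤ (u ⬝ᵥ A.mulVec u) * (w ⬝ᵥ A.mulVec w) := by nlinarith
  calc u ⬝ᵥ A.mulVec w ≤ |u ⬝ᵥ A.mulVec w| := le_abs_self _
    _ = Real.sqrt ((u ⬝ᵥ A.mulVec w) ^ 2) := (Real.sqrt_sq_eq_abs _).symm
    _ ≤ Real.sqrt ((u ⬝ᵥ A.mulVec u) * (w ⬝ᵥ A.mulVec w)) := Real.sqrt_le_sqrt h2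
    _ = Real.sqrt (u ⬝ᵥ A.mulVec u) * Real.sqrt (w ⬝ᵥ A.mulVec w) :=
        Real.sqrt_mul (hnn u) _

end CS

/-- With `d_Σ := 𝟙ᵀ (V^{-1/2} Σ⁻¹ V^{-1/2}) 𝟙`, for every `x ∈ ℝ^d`,
`∏_c R((V^{-1/2}Σ⁻¹x)_c) ≥ R((√d_Σ/d)·√(xᵀΣ⁻¹x))^d`. -/
theorem millsRatio_prod_lower_bound (d : ℕ)
    (S : Matrix (Fin d) (Fin d) ℝ) (hS : S.PosDef)
    (v : Fin d → ℝ) (hv : ∀ i, 0 < v i)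
    (x : Fin d → ℝ) :
    let Vinvsqrt : Matrix (Fin d) (Fin d) ℝ := Matrix.diagonal fun i => (Real.sqrt (v i))⁻¹
    let dSigma : ℝ := (fun _ => (1 : ℝ)) ⬝ᵥ (Vinvsqrt * S⁻¹ * Vinvsqrt).mulVec (fun _ => (1 : ℝ))
    (∏ c, millsRatio ((Vinvsqrt.mulVec (S⁻¹.mulVec x)) c))
      ≥ millsRatio ((Real.sqrt dSigma / (d : ℝ)) * Real.sqrt (x ⬝ᵥ S⁻¹.mulVec x)) ^ d := by
  intro Vinvsqrt dSigma
  rcases Nat.eq_zero_or_pos d with hd | hd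
  · subst hd; simp
  have hdpos : (0:ℝ) < d := by exact_mod_cast hd
  have hA : (S⁻¹).PosDef := hS.inv
  set A := S⁻¹ with hAdef
  set u : Fin d → ℝ := fun i => (Real.sqrt (v i))⁻¹ with hu
  set y := Vinvsqrt.mulVec (A.mulVec x) with hy
  have hones : Vinvsqrt.mulVec (fun _ => (1:ℝ)) = u := by
    ext i; simp [Vinvsqrt, Matrix.mulVec_diagonal, hu]
  have honesv : Matrix.vecMul (fun _ => (1:ℝ)) Vinvsqrt = u := by
    ext i; simp [Vinvsqrt, Matrix.vecMul_diagonal, hu]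
  have hdS : dSigma = u ⬝ᵥ A.mulVec u := by
    show (fun _ => (1:ℝ)) ⬝ᵥ (Vinvsqrt * A * Vinvsqrt).mulVec (fun _ => (1:ℝ)) = _
    rw [← Matrix.mulVec_mulVec, ← Matrix.mulVec_mulVec, hones, Matrix.dotProduct_mulVec, honesv]
  have hsum : ∑ c, y c = u ⬝ᵥ A.mulVec x := by
    have h1 : ∑ c, y c = (fun _ => (1:ℝ)) ⬝ᵥ y := by simp [dotProduct]
    rw [h1, hy, Matrix.dotProduct_mulVec, honesv]
  set q : ℝ := x ⬝ᵥ A.mulVec x with hq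
  have hq0 : 0 ≤ q := by have := hA.posSemidef.dotProduct_mulVec_nonneg x; simpa using this
  have hdS0 : 0 ≤ dSigma := by
    rw [hdS]; have := hA.posSemidef.dotProduct_mulVec_nonneg u; simpa using this
  have hCS : u ⬝ᵥ A.mulVec x ≤ Real.sqrt dSigma * Real.sqrt q := by
    rw [hdS]; exact cs_posSemidef hA.posSemidef u x
  set m : ℝ := Real.sqrt dSigma / d * Real.sqrt q with hm
  have hym : (∑ c, y c) / d ≤ m := by
    rw [hm, div_mul_eq_mul_div]
    exact (div_le_div_iff_of_pos_right hdpos).mpr (hsum ▸ hCS)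
  -- Jensen
  have hJ := log_millsRatio_convex.map_sum_le (t := Finset.univ)
    (w := fun _ : Fin d => 1 / (d:ℝ)) (p := y)
    (fun i _ => by positivity)
    (by simp [Finset.card_univ]; field_simp)
    (fun i _ => Set.mem_univ _)
  have hmean : ∑ i : Fin d, (1 / (d:ℝ)) • y i = (∑ c, y c) / d := by
    simp only [smul_eq_mul, ← Finset.sum_mul, ← Finset.mul_sum]
    ring
  rw [hmean] at hJ
  have hlog1 : Real.log (millsRatio m) ≤ Real.log (millsRatio ((∑ c, y c) / d)) :=
    Real.log_le_log (millsRatio_pos m) (millsRatio_anti hym)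
  have hkey : (d:ℝ) * Real.log (millsRatio m) ≤ ∑ c, Real.log (millsRatio (y c)) := by
    have h2 : (d:ℝ) * Real.log (millsRatio m)
        ≤ (d:ℝ) * ∑ i, (1 / (d:ℝ)) * Real.log (millsRatio (y i)) :=
      mul_le_mul_of_nonneg_left (hlog1.trans hJ) hdpos.le
    calc (d:ℝ) * Real.log (millsRatio m)
        ≤ (d:ℝ) * ∑ i, (1 / (d:ℝ)) * Real.log (millsRatio (y i)) := h2
      _ = ∑ c, Real.log (millsRatio (y c)) := by
          rw [← Finset.mul_sum]
          field_simp
  have hprod : ∏ c, millsRatio (y c) = Real.exp (∑ c, Real.log (millsRatio (y c))) := by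
    rw [Real.exp_sum]
    exact Finset.prod_congr rfl fun c _ => (Real.exp_log (millsRatio_pos _)).symm
  have hpow : millsRatio m ^ d = Real.exp ((d:ℝ) * Real.log (millsRatio m)) := by
    rw [Real.exp_nat_mul, Real.exp_log (millsRatio_pos m)]
  rw [ge_iff_le, hpow, hprod]
  exact Real.exp_le_exp.2 hkey
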